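/- With the setup of the truth matrix T for the equation M_F u x = c, a logical matrix M_G ∈ L_{2^m×2^n} defines a consequence solution (i.e., for every pair (u,x) ∈ Δ_{2^m}×Δ_{2^n} with M_F u x = c one has u = M_G x) if and only if T ≤ M_G entrywise. -/
import Mathlib


open Matrix Kronecker

noncomputable section

/-- Row-major pairing `(i, j) ↦ N * i + j`, matching the standard Kronecker convention. -/
def kronEquiv (M N : ℕ) : Fin M × Fin N ≃ Fin (M * N) := finProdFinEquiv

/-- Kronecker product of two (column) vectors. -/
def vecKron {M N : ℕ} (u : Fin M → ℝ) (x : Fin N → ℝ) : Fin (M * N) → ℝ :=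
  fun k => u ((kronEquiv M N).symm k).1 * x ((kronEquiv M N).symm k).2

/-- `δ_N^i` (0-indexed): the `i`-th column of the identity matrix `I_N`. -/
def eVec (N : ℕ) (i : Fin N) : Fin N → ℝ := fun j => if j = i then 1 else 0

/-- The set `Δ_N` of columns of the identity matrix. -/
def deltaSet (N : ℕ) : Set (Fin N → ℝ) := {x | ∃ i, x = eVec N i}

/-- A matrix is logical if every column is a standard basis vector. -/
def IsLogical {m n : ℕ} (L : Matrix (Fin m) (Fin n) ℝ) : Prop :=
  ∀ j, ∃ i, (fun k => L k j) = eVec m i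

/-- The power-reducing matrix `PR_k = diag(δ_k^1, …, δ_k^k)`: column `j` is `δ_k^j ⊗ δ_k^j`. -/
def PRmat (k : ℕ) : Matrix (Fin (k * k)) (Fin k) ℝ :=
  Matrix.of fun i j => vecKron (eVec k j) (eVec k j) i

lemma stp_dim (n p : ℕ) : p * (Nat.lcm n p / p) = n * (Nat.lcm n p / n) := by
  rw [Nat.mul_div_cancel' (Nat.dvd_lcm_right n p), Nat.mul_div_cancel' (Nat.dvd_lcm_left n p)]

/-- The semi-tensor product `A ⋉ B = (A ⊗ I_{t/n})(B ⊗ I_{t/p})`, `t = lcm(n,p)`. -/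
def stp {m n p q : ℕ} (A : Matrix (Fin m) (Fin n) ℝ) (B : Matrix (Fin p) (Fin q) ℝ) :
    Matrix (Fin (m * (Nat.lcm n p / n))) (Fin (q * (Nat.lcm n p / p))) ℝ :=
  (Matrix.reindex (kronEquiv m _) (kronEquiv n _)
      (A ⊗ₖ (1 : Matrix (Fin (Nat.lcm n p / n)) (Fin (Nat.lcm n p / n)) ℝ))) *
  (Matrix.reindex ((kronEquiv p _).trans (finCongr (stp_dim n p))) (kronEquiv q _)
      (B ⊗ₖ (1 : Matrix (Fin (Nat.lcm n p / p)) (Fin (Nat.lcm n p / p)) ℝ)))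

lemma mulVec_eVec {M N : ℕ} (A : Matrix (Fin M) (Fin N) ℝ) (j : Fin N) :
    A.mulVec (eVec N j) = fun k => A k j := by
  funext k
  simp [Matrix.mulVec, dotProduct, eVec]

/-- `u = M_G x` is a consequence solution of `M_F u x = c`
iff `T ≤ M_G` entrywise, where `T` is the truth matrix. -/
theorem consequence_iff (m n s : ℕ)
    (MF : Matrix (Fin (2 ^ s)) (Fin (2 ^ m * 2 ^ n)) ℝ) (hMF : IsLogical MF)
    (c : Fin (2 ^ s) → ℝ) (hc : c ∈ deltaSet (2 ^ s))
    (T : Matrix (Fin (2 ^ m)) (Fin (2 ^ n)) ℝ)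
    (hT : ∀ i j, T i j =
      if MF.mulVec (vecKron (eVec (2 ^ m) i) (eVec (2 ^ n) j)) = c then 1 else 0)
    (MG : Matrix (Fin (2 ^ m)) (Fin (2 ^ n)) ℝ) (hMG : IsLogical MG) :
    (∀ u ∈ deltaSet (2 ^ m), ∀ x ∈ deltaSet (2 ^ n),
        MF.mulVec (vecKron u x) = c → u = MG.mulVec x) ↔
      ∀ i j, T i j ≤ MG i j := by
  have hcol : ∀ j, ∃ i, (fun k => MG k j) = eVec (2 ^ m) i := hMG
  constructor
  · intro h i j
    rw [hT i j]
    split_ifs with hcase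
    · have := h (eVec (2 ^ m) i) ⟨i, rfl⟩ (eVec (2 ^ n) j) ⟨j, rfl⟩ hcase
      rw [mulVec_eVec] at this
      have h2 := congrFun this i
      simp [eVec] at h2
      simp [← h2]
    · obtain ⟨i₀, hi₀⟩ := hcol j
      have : MG i j = eVec (2 ^ m) i₀ i := congrFun hi₀ i
      rw [this]
      simp [eVec]
      split_ifs <;> norm_num
  · rintro h u ⟨i, rfl⟩ x ⟨j, rfl⟩ hcase
    have hTij : T i j = 1 := by rw [hT i j]; simp [hcase]
    have h1 : (1 : ℝ) ≤ MG i j := hTij ▸ h i j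
    obtain ⟨i₀, hi₀⟩ := hcol j
    have he : MG i j = eVec (2 ^ m) i₀ i := congrFun hi₀ i
    have : i = i₀ := by
      by_contra hne
      rw [he] at h1; simp [eVec, hne] at h1; linarith
    rw [mulVec_eVec, hi₀, this]
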